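/- Positivity of the quartic interaction Morawetz form: For all Schwartz functions u, v : ℝ → ℂ, ∫_ℝ [ M(u)(x)·E(v)(x) + M(v)(x)·E(u)(x) − 2·P(u)(x)·P(v)(x) ] dx = 4 ∫_ℝ |∂_x (u(x)·conj(v(x)))|² dx. In particular the left-hand side is nonnegative. -/

import Mathlib

noncomputable section
open ComplexConjugate MeasureTheory

/-- The mass density `M(u) = |u|²` of a function of `x` (as `u·conj u`). -/
def Md (u : ℝ → ℂ) (x : ℝ) : ℂ := u x * conj (u x)

/-- The momentum density `P(u) = i(conj u·∂ₓu − u·∂ₓ(conj u))`. -/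
def Pd (u : ℝ → ℂ) (x : ℝ) : ℂ :=
  Complex.I * (conj (u x) * deriv u x - u x * conj (deriv u x))

/-- The energy density `E(u) = −conj u·∂ₓ²u + 2|∂ₓu|² − u·∂ₓ²(conj u)`. -/
def Ed (u : ℝ → ℂ) (x : ℝ) : ℂ :=
  - conj (u x) * deriv (deriv u) x + 2 * deriv u x * conj (deriv u x)
    - u x * conj (deriv (deriv u) x)

open SchwartzMap Filter Topology

lemma schwartz_hasTemperateGrowth (f : SchwartzMap ℝ ℂ) : Function.HasTemperateGrowth ⇑f := by
  refine ⟨f.smooth ⊤, fun n => ⟨0, SchwartzMap.seminorm ℝ 0 n f, fun x => ?_⟩⟩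
  simpa using SchwartzMap.norm_iteratedFDeriv_le_seminorm ℝ f n x

/-- `a * conj b` as a real-bilinear continuous map. -/
def mulConjB : ℂ →L[ℝ] ℂ →L[ℝ] ℂ :=
  (ContinuousLinearMap.mul ℝ ℂ).bilinearComp (ContinuousLinearMap.id ℝ ℂ)
    Complex.conjCLE.toContinuousLinearMap

/-- `f * conj g` as a Schwartz map. -/
def mc (f g : SchwartzMap ℝ ℂ) : SchwartzMap ℝ ℂ :=
  SchwartzMap.bilinLeftCLM mulConjB (schwartz_hasTemperateGrowth g) f

lemma mc_apply (f g : SchwartzMap ℝ ℂ) (x : ℝ) : mc f g x = f x * conj (g x) := rfl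

/-- `f * g` as a Schwartz map. -/
def mulS (f g : SchwartzMap ℝ ℂ) : SchwartzMap ℝ ℂ :=
  SchwartzMap.bilinLeftCLM (ContinuousLinearMap.mul ℝ ℂ) (schwartz_hasTemperateGrowth g) f

lemma mulS_apply (f g : SchwartzMap ℝ ℂ) (x : ℝ) : mulS f g x = f x * g x := rfl

lemma deriv_coe (f : SchwartzMap ℝ ℂ) : deriv ⇑f = ⇑(derivCLM ℝ ℂ f) :=
  funext fun x => (derivCLM_apply ℝ f x).symm

lemma schwartz_tendsto_atTop (f : SchwartzMap ℝ ℂ) : Tendsto ⇑f atTop (𝓝 0) :=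
  (zero_at_infty f).mono_left (by rw [cocompact_eq_atBot_atTop]; exact le_sup_right)

lemma schwartz_tendsto_atBot (f : SchwartzMap ℝ ℂ) : Tendsto ⇑f atBot (𝓝 0) :=
  (zero_at_infty f).mono_left (by rw [cocompact_eq_atBot_atTop]; exact le_sup_left)

lemma integral_deriv_deriv_eq_zero (f : SchwartzMap ℝ ℂ) :
    ∫ x, deriv (deriv ⇑f) x = 0 := by
  rw [deriv_coe f]
  have h := integral_of_hasDerivAt_of_tendsto (f := ⇑(derivCLM ℝ ℂ f))
    (f' := fun x => deriv (⇑(derivCLM ℝ ℂ f)) x)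
    (fun x => (derivCLM ℝ ℂ f).differentiableAt.hasDerivAt)
    (by rw [deriv_coe]; exact (derivCLM ℝ ℂ (derivCLM ℝ ℂ f)).integrable)
    (schwartz_tendsto_atBot _) (schwartz_tendsto_atTop _)
  simpa using h

lemma hda (f : SchwartzMap ℝ ℂ) (x : ℝ) : HasDerivAt ⇑f ((derivCLM ℝ ℂ f) x) x := by
  rw [derivCLM_apply]; exact f.differentiableAt.hasDerivAt

lemma hdaconj (f : SchwartzMap ℝ ℂ) (x : ℝ) :
    HasDerivAt (fun y => conj (f y)) (conj ((derivCLM ℝ ℂ f) x)) x := by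
  rw [derivCLM_apply]; exact f.differentiableAt.hasDerivAt.star

/-- Positivity of the quartic interaction Morawetz form: for Schwartz
functions `u`, `v`,
`∫ (M(u)E(v) + M(v)E(u) − 2P(u)P(v)) = 4∫ |∂ₓ(u·conj v)|²`; in particular the
left-hand side is nonnegative. -/
theorem interaction_morawetz_positivity (u v : SchwartzMap ℝ ℂ) :
    (∫ x : ℝ, (Md (⇑u) x * Ed (⇑v) x + Md (⇑v) x * Ed (⇑u) x
        - 2 * Pd (⇑u) x * Pd (⇑v) x))
      = 4 * ∫ x : ℝ, (deriv (fun y => u y * conj (v y)) x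
          * conj (deriv (fun y => u y * conj (v y)) x)) ∧
    0 ≤ (∫ x : ℝ, (Md (⇑u) x * Ed (⇑v) x + Md (⇑v) x * Ed (⇑u) x
        - 2 * Pd (⇑u) x * Pd (⇑v) x)).re := by
  set u1 := derivCLM ℝ ℂ u with hu1
  set u2 := derivCLM ℝ ℂ u1 with hu2
  set v1 := derivCLM ℝ ℂ v with hv1
  set v2 := derivCLM ℝ ℂ v1 with hv2
  -- the Schwartz map u * conj v and its derivative
  have hWmc : (fun y : ℝ => u y * conj (v y)) = ⇑(mc u v) := rfl
  have hdW : deriv (fun y : ℝ => u y * conj (v y))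
      = fun x => u1 x * conj (v x) + u x * conj (v1 x) := by
    funext x
    exact ((hda u x).mul (hdaconj v x)).deriv
  -- the Schwartz map G = |u|² |v|²
  set G : SchwartzMap ℝ ℂ := mulS (mc u u) (mc v v) with hG
  have hmu : ∀ x : ℝ, HasDerivAt (fun y => u y * conj (u y))
      (u1 x * conj (u x) + u x * conj (u1 x)) x := fun x => (hda u x).mul (hdaconj u x)
  have hmv : ∀ x : ℝ, HasDerivAt (fun y => v y * conj (v y))
      (v1 x * conj (v x) + v x * conj (v1 x)) x := fun x => (hda v x).mul (hdaconj v x)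
  have hG1 : deriv ⇑G = fun x =>
      (u1 x * conj (u x) + u x * conj (u1 x)) * (v x * conj (v x))
        + (u x * conj (u x)) * (v1 x * conj (v x) + v x * conj (v1 x)) := by
    funext x
    exact ((hmu x).mul (hmv x)).deriv
  have hG2 : deriv (deriv ⇑G) = fun x =>
      ((u2 x * conj (u x) + u1 x * conj (u1 x)) + (u1 x * conj (u1 x) + u x * conj (u2 x)))
          * (v x * conj (v x))
        + (u1 x * conj (u x) + u x * conj (u1 x)) * (v1 x * conj (v x) + v x * conj (v1 x))
        + ((u1 x * conj (u x) + u x * conj (u1 x)) * (v1 x * conj (v x) + v x * conj (v1 x))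
            + (u x * conj (u x)) *
              ((v2 x * conj (v x) + v1 x * conj (v1 x)) + (v1 x * conj (v1 x) + v x * conj (v2 x)))) := by
    rw [hG1]
    funext x
    exact (((((hda u1 x).mul (hdaconj u x)).add ((hda u x).mul (hdaconj u1 x))).mul (hmv x)).add
      (((hmu x).mul (((hda v1 x).mul (hdaconj v x)).add ((hda v x).mul (hdaconj v1 x)))))).deriv
  -- pointwise identity
  have hpt : ∀ x : ℝ, Md (⇑u) x * Ed (⇑v) x + Md (⇑v) x * Ed (⇑u) x
      - 2 * Pd (⇑u) x * Pd (⇑v) x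
      = 4 * (deriv (fun y => u y * conj (v y)) x
          * conj (deriv (fun y => u y * conj (v y)) x)) - deriv (deriv ⇑G) x := by
    intro x
    rw [hdW, hG2]
    simp only [Md, Ed, Pd, deriv_coe u, deriv_coe v, deriv_coe u1, deriv_coe v1, ← hu1, ← hv1,
      ← hu2, ← hv2, map_add, map_mul, Complex.conj_conj]
    linear_combination (-2 * (conj (u x) * u1 x - u x * conj (u1 x))
      * (conj (v x) * v1 x - v x * conj (v1 x))) * Complex.I_sq
  -- package |∂(u conj v)|² as a Schwartz function
  set K : SchwartzMap ℝ ℂ := mc (derivCLM ℝ ℂ (mc u v)) (derivCLM ℝ ℂ (mc u v)) with hK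
  have hKeq : (fun x => deriv (fun y => u y * conj (v y)) x
      * conj (deriv (fun y => u y * conj (v y)) x)) = ⇑K := by
    funext x
    rw [hWmc, deriv_coe (mc u v)]
    rfl
  have hGdd : deriv (deriv ⇑G) = ⇑(derivCLM ℝ ℂ (derivCLM ℝ ℂ G)) := by
    rw [deriv_coe G, deriv_coe (derivCLM ℝ ℂ G)]
  have hKx : ∀ x : ℝ, deriv (fun y => u y * conj (v y)) x
      * conj (deriv (fun y => u y * conj (v y)) x) = K x := fun x => congrFun hKeq x
  have h0 : ∫ x : ℝ, (derivCLM ℝ ℂ (derivCLM ℝ ℂ G)) x = 0 := by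
    have h := integral_deriv_deriv_eq_zero G
    rwa [hGdd] at h
  have hmain : (∫ x : ℝ, (Md (⇑u) x * Ed (⇑v) x + Md (⇑v) x * Ed (⇑u) x
      - 2 * Pd (⇑u) x * Pd (⇑v) x))
      = 4 * ∫ x : ℝ, (deriv (fun y => u y * conj (v y)) x
        * conj (deriv (fun y => u y * conj (v y)) x)) := by
    simp only [hpt, hKx, hGdd]
    rw [integral_sub (K.integrable.const_mul 4) (derivCLM ℝ ℂ (derivCLM ℝ ℂ G)).integrable,
      h0, sub_zero, integral_const_mul]
  refine ⟨hmain, ?_⟩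
  rw [hmain]
  simp only [hKx]
  have h4 : ((4 : ℂ) * ∫ x : ℝ, K x).re = 4 * (∫ x : ℝ, K x).re := by
    simp [Complex.mul_re]
  rw [h4]
  have hre : (∫ x : ℝ, K x).re = ∫ x : ℝ, (K x).re := by
    simpa using (integral_re K.integrable).symm
  rw [hre]
  have hnonneg : ∀ x : ℝ, 0 ≤ (K x).re := by
    intro x
    rw [hK, mc_apply, Complex.mul_conj]
    simpa using Complex.normSq_nonneg _
  have := integral_nonneg (μ := volume) (f := fun x => (K x).re) hnonneg
  linarith
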